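/- Let A = conv(Y) + cone(V) ⊆ ℝᵈ be a V-polyhedron, where Y = {y₁, …, y_p} is a finite nonempty set of points and V = {v₁, …, v_q} a finite set of vectors. Then the polar dual of A with respect to the origin is the H-polyhedron A* = {x ∈ ℝᵈ : ⟪yᵢ, x⟫ ≤ 1 for i = 1, …, p, and ⟪vⱼ, x⟫ ≤ 0 for j = 1, …, q}. Moreover, if A has nonempty interior and the origin belongs to the interior of A, then A* is bounded, i.e., A* is an H-polytope. -/

import Mathlib

open RealInnerProductSpace Pointwise

/-- The polar dual of `A ⊆ ℝᵈ` with respect to the origin. -/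
def polarDual {d : ℕ} (A : Set (EuclideanSpace ℝ (Fin d))) :
    Set (EuclideanSpace ℝ (Fin d)) :=
  {b | ∀ a ∈ A, ⟪a, b⟫ ≤ 1}

/-- The cone (set of nonnegative linear combinations) generated by the vectors
`v 0, …, v (q-1)`. -/
def coneOf {d q : ℕ} (v : Fin q → EuclideanSpace ℝ (Fin d)) :
    Set (EuclideanSpace ℝ (Fin d)) :=
  {x | ∃ μ : Fin q → ℝ, (∀ j, 0 ≤ μ j) ∧ x = ∑ j, μ j • v j}

/-- The polar dual of the `V`-polyhedron `A = conv{y₁,…,y_p} + cone{v₁,…,v_q}`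
(with `p ≥ 1`) is the `H`-polyhedron
`{x | ⟪yᵢ, x⟫ ≤ 1 for all i, ⟪vⱼ, x⟫ ≤ 0 for all j}`; moreover if the origin
lies in the interior of `A` then `A*` is bounded (an `H`-polytope). -/
theorem polarDual_vPolyhedron (d p q : ℕ) (hp : 0 < p)
    (y : Fin p → EuclideanSpace ℝ (Fin d)) (v : Fin q → EuclideanSpace ℝ (Fin d))
    (A : Set (EuclideanSpace ℝ (Fin d)))
    (hA : A = convexHull ℝ (Set.range y) + coneOf v) :
    (polarDual A = {x : EuclideanSpace ℝ (Fin d) |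
        (∀ i, ⟪y i, x⟫ ≤ 1) ∧ ∀ j, ⟪v j, x⟫ ≤ 0}) ∧
    ((interior A).Nonempty → (0 : EuclideanSpace ℝ (Fin d)) ∈ interior A →
      Bornology.IsBounded (polarDual A)) := by
  have hmem : ∀ (c : EuclideanSpace ℝ (Fin d)) (w : EuclideanSpace ℝ (Fin d)),
      c ∈ convexHull ℝ (Set.range y) → w ∈ coneOf v → c + w ∈ A := by
    intro c w hc hw
    rw [hA]
    exact Set.add_mem_add hc hw
  have hzero : (0 : EuclideanSpace ℝ (Fin d)) ∈ coneOf v :=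
    ⟨fun _ => 0, fun _ => le_refl 0, by simp⟩
  have key : polarDual A = {x : EuclideanSpace ℝ (Fin d) |
      (∀ i, ⟪y i, x⟫ ≤ 1) ∧ ∀ j, ⟪v j, x⟫ ≤ 0} := by
    ext x
    simp only [polarDual, Set.mem_setOf_eq]
    constructor
    · intro h
      constructor
      · intro i
        have := h (y i) (by simpa using hmem (y i) 0 (subset_convexHull ℝ _ ⟨i, rfl⟩) hzero)
        exact this
      · intro j
        by_contra hc
        push_neg at hc
        set b := ⟪y ⟨0, hp⟩, x⟫ with hb
        set c := ⟪v j, x⟫ with hcdef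
        set t : ℝ := max 0 ((2 - b) / c) with ht
        have ht0 : 0 ≤ t := le_max_left _ _
        have hmemc : t • v j ∈ coneOf v := by
          refine ⟨fun k => if k = j then t else 0, fun k => by positivity, ?_⟩
          simp [ite_smul]
        have := h (y ⟨0, hp⟩ + t • v j)
          (hmem _ _ (subset_convexHull ℝ _ ⟨⟨0, hp⟩, rfl⟩) hmemc)
        rw [inner_add_left, real_inner_smul_left] at this
        have htc : t * c ≥ 2 - b := by
          have : ((2 - b) / c) * c = 2 - b := div_mul_cancel₀ _ (ne_of_gt hc)
          nlinarith [le_max_right 0 ((2 - b) / c), mul_le_mul_of_nonneg_right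
            (le_max_right 0 ((2 - b) / c)) (le_of_lt hc)]
        linarith
    · rintro ⟨h1, h2⟩ a ha
      rw [hA] at ha
      obtain ⟨c, hc, w, hw, rfl⟩ := ha
      obtain ⟨μ, hμ, rfl⟩ := hw
      have hcx : ⟪c, x⟫ ≤ 1 := by
        have hconv : convexHull ℝ (Set.range y) ⊆ {c | ⟪c, x⟫ ≤ 1} := by
          apply convexHull_min
          · rintro _ ⟨i, rfl⟩; exact h1 i
          · exact convex_halfSpace_le
              ⟨fun a b => inner_add_left a b x, fun r a => real_inner_smul_left a x r⟩ 1
        exact hconv hc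
      have hwx : ⟪(∑ j, μ j • v j : EuclideanSpace ℝ (Fin d)), x⟫ ≤ 0 := by
        rw [sum_inner]
        apply Finset.sum_nonpos
        intro j _
        rw [real_inner_smul_left]
        exact mul_nonpos_of_nonneg_of_nonpos (hμ j) (h2 j)
      calc ⟪c + ∑ j, μ j • v j, x⟫ = ⟪c, x⟫ + ⟪(∑ j, μ j • v j : EuclideanSpace ℝ (Fin d)), x⟫ :=
            inner_add_left _ _ _
        _ ≤ 1 + 0 := add_le_add hcx hwx
        _ = 1 := by ring
  refine ⟨key, fun _ h0 => ?_⟩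
  obtain ⟨ε, hε, hball⟩ := Metric.isOpen_iff.mp isOpen_interior 0 h0
  have hball' : Metric.ball (0 : EuclideanSpace ℝ (Fin d)) ε ⊆ A :=
    hball.trans interior_subset
  apply (Metric.isBounded_closedBall (x := (0 : EuclideanSpace ℝ (Fin d))) (r := 2 / ε)).subset
  intro x hx
  rw [Metric.mem_closedBall, dist_zero_right]
  rcases eq_or_ne x 0 with rfl | hx0
  · simp; positivity
  · have hnx : 0 < ‖x‖ := norm_pos_iff.mpr hx0
    set a : EuclideanSpace ℝ (Fin d) := (ε / (2 * ‖x‖)) • x with hadef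
    have hna : ‖a‖ = ε / 2 := by
      rw [hadef, norm_smul, Real.norm_eq_abs, abs_of_pos (by positivity)]
      field_simp
    have haA : a ∈ A := hball' (by
      rw [Metric.mem_ball, dist_zero_right, hna]; linarith)
    have := hx a haA
    rw [real_inner_smul_left, real_inner_self_eq_norm_sq] at this
    rw [div_mul_eq_mul_div, pow_two, ← mul_assoc] at this
    have h2 : ε * ‖x‖ ≤ 2 := by
      have h2x : (0:ℝ) < 2 * ‖x‖ := by positivity
      calc ε * ‖x‖ = (ε * ‖x‖ * ‖x‖) / (2 * ‖x‖) * 2 := by field_simp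
        _ ≤ 1 * 2 := by nlinarith [this]
        _ = 2 := one_mul 2
    rw [le_div_iff₀ hε]
    linarith
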